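/- For f: [0,∞) → ℝ continuous with supp f ⊆ [0,1], the constant α₀(f) = ∫_{ℝ⁵} (R_0^1(x))² dx equals (1/(3·8π²))·(1 + ∫_0^1 s⁴ (f(s²) + 1)² ds), and in particular α₀(f) ≥ 1/(24π²). -/

import Mathlib

open MeasureTheory Real Set

noncomputable def R0L (f : ℝ → ℝ) (Λ : ℝ) (x : EuclideanSpace ℝ (Fin 5)) : ℝ :=
  (Λ ^ 3 / (8 * π ^ 2)) * f (‖x‖ ^ 2 * Λ ^ 2) +
    (1 / (8 * π ^ 2)) * (if ‖x‖ ≤ 1 / Λ then Λ ^ 3 else ‖x‖⁻¹ ^ 3)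

set_option maxHeartbeats 1600000 in
/-- `α₀(f) = ∫_{ℝ⁵} (R₀^1(x))² dx = (1/(3·8π²))(1 + ∫₀¹ s⁴ (f(s²)+1)² ds)`, and in
particular `α₀(f) ≥ 1/(24π²)`. -/
theorem stmt7 (f : ℝ → ℝ) (hf : Continuous f) (hsupp : Function.support f ⊆ Set.Icc 0 1) :
    (∫ x, (R0L f 1 x) ^ 2)
        = (1 / (3 * (8 * π ^ 2))) * (1 + ∫ s in (0:ℝ)..1, s ^ 4 * (f (s ^ 2) + 1) ^ 2) ∧
      (1 / (24 * π ^ 2) : ℝ) ≤ ∫ x, (R0L f 1 x) ^ 2 := by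
  have hπ : (0:ℝ) < π := Real.pi_pos
  have h8 : (8 * π ^ 2 : ℝ) ≠ 0 := by positivity
  set C : ℝ := 1 / (8 * π ^ 2) with hC
  set φ : ℝ → ℝ := fun r => C ^ 2 * (f (r ^ 2) + (if r ≤ 1 then 1 else r⁻¹ ^ 3)) ^ 2 with hφ
  -- pointwise identity
  have hpt : ∀ x : EuclideanSpace ℝ (Fin 5), (R0L f 1 x) ^ 2 = φ ‖x‖ := by
    intro x
    simp only [R0L, one_pow, mul_one, div_one, hφ, hC]
    ring
  -- volume of the unit ball in ℝ⁵
  have hg : Real.Gamma ((5:ℝ)/2 + 1) = 15/8 * Real.sqrt π := by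
    rw [Real.Gamma_add_one (by norm_num), show (5:ℝ)/2 = 3/2 + 1 by norm_num,
      Real.Gamma_add_one (by norm_num), show (3:ℝ)/2 = 1/2 + 1 by norm_num,
      Real.Gamma_add_one (by norm_num), Real.Gamma_one_half_eq]
    ring
  have hsq : Real.sqrt π ^ 5 = π ^ 2 * Real.sqrt π := by
    have h2 : Real.sqrt π ^ 5 = (Real.sqrt π ^ 2) ^ 2 * Real.sqrt π := by ring
    rw [h2, Real.sq_sqrt hπ.le]
  have hsqpos : 0 < Real.sqrt π := Real.sqrt_pos.mpr hπ
  have hball : (volume (Metric.ball (0:EuclideanSpace ℝ (Fin 5)) 1)).toReal = 8 * π ^ 2 / 15 := by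
    rw [EuclideanSpace.volume_ball]
    simp only [Fintype.card_fin, ENNReal.ofReal_one, one_pow, one_mul, Nat.cast_ofNat]
    rw [ENNReal.toReal_ofReal (by positivity)]
    rw [hg, hsq]
    field_simp
  -- spherical integration
  have hsphere := MeasureTheory.integral_fun_norm_addHaar
    (volume : Measure (EuclideanSpace ℝ (Fin 5))) φ
  rw [finrank_euclideanSpace_fin, measureReal_def, hball] at hsphere
  have hint : (∫ x, (R0L f 1 x) ^ 2) =
      (8 * π ^ 2 / 3) * ∫ y in Ioi (0:ℝ), y ^ 4 * φ y := by
    calc (∫ x, (R0L f 1 x) ^ 2) = ∫ x : EuclideanSpace ℝ (Fin 5), φ ‖x‖ := by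
          exact integral_congr_ae (Filter.Eventually.of_forall hpt)
      _ = (8 * π ^ 2 / 3) * ∫ y in Ioi (0:ℝ), y ^ 4 * φ y := by
          rw [hsphere]
          simp only [nsmul_eq_mul, smul_eq_mul]
          norm_num
          ring
  -- split the radial integral
  have hmem : ∀ y ∈ Ioc (0:ℝ) 1, y ^ 4 * φ y = C ^ 2 * (y ^ 4 * (f (y ^ 2) + 1) ^ 2) := by
    intro y hy
    simp only [hφ, if_pos hy.2]
    ring
  have hmem' : ∀ y ∈ Ioi (1:ℝ), y ^ 4 * φ y = C ^ 2 * y ^ (-2:ℝ) := by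
    intro y hy
    have hy1 : (1:ℝ) < y := hy
    have hy0 : (0:ℝ) < y := lt_trans zero_lt_one hy1
    have hfy : f (y ^ 2) = 0 := by
      by_contra h
      have := hsupp h
      have : y ^ 2 ≤ 1 := this.2
      nlinarith
    have hpow : y ^ (-2:ℝ) = (y ^ (2:ℕ))⁻¹ := by
      rw [show (-2:ℝ) = -((2:ℕ):ℝ) by norm_num, Real.rpow_neg hy0.le, Real.rpow_natCast]
    simp only [hφ, if_neg (not_le.mpr hy1), hfy, hpow]
    field_simp
    ring
  have hi1 : IntegrableOn (fun y => y ^ 4 * φ y) (Ioc (0:ℝ) 1) := by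
    have hc : Continuous fun y : ℝ => C ^ 2 * (y ^ 4 * (f (y ^ 2) + 1) ^ 2) := by
      continuity
    exact (hc.integrableOn_Ioc).congr_fun (fun y hy => (hmem y hy).symm) measurableSet_Ioc
  have hi2 : IntegrableOn (fun y => y ^ 4 * φ y) (Ioi (1:ℝ)) := by
    have : IntegrableOn (fun y : ℝ => C ^ 2 * y ^ (-2:ℝ)) (Ioi (1:ℝ)) :=
      (((integrableOn_Ioi_rpow_iff zero_lt_one).mpr (by norm_num)).const_mul _)
    exact this.congr_fun (fun y hy => (hmem' y hy).symm) measurableSet_Ioi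
  have hunion : Ioc (0:ℝ) 1 ∪ Ioi 1 = Ioi 0 := Ioc_union_Ioi_eq_Ioi zero_le_one
  have hsplit : (∫ y in Ioi (0:ℝ), y ^ 4 * φ y) =
      (∫ y in Ioc (0:ℝ) 1, y ^ 4 * φ y) + ∫ y in Ioi (1:ℝ), y ^ 4 * φ y := by
    rw [← hunion]
    exact setIntegral_union (Ioc_disjoint_Ioi le_rfl) measurableSet_Ioi hi1 hi2
  have hpart1 : (∫ y in Ioc (0:ℝ) 1, y ^ 4 * φ y) =
      C ^ 2 * ∫ s in (0:ℝ)..1, s ^ 4 * (f (s ^ 2) + 1) ^ 2 := by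
    rw [intervalIntegral.integral_of_le zero_le_one,
      setIntegral_congr_fun measurableSet_Ioc hmem, integral_const_mul]
  have hpart2 : (∫ y in Ioi (1:ℝ), y ^ 4 * φ y) = C ^ 2 := by
    rw [setIntegral_congr_fun measurableSet_Ioi hmem', integral_const_mul,
      integral_Ioi_rpow_of_lt (by norm_num) zero_lt_one]
    norm_num
  set J : ℝ := ∫ s in (0:ℝ)..1, s ^ 4 * (f (s ^ 2) + 1) ^ 2 with hJdef
  have hJ : 0 ≤ J := by
    apply intervalIntegral.integral_nonneg zero_le_one
    intro s hs
    positivity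
  have hmain : (∫ x, (R0L f 1 x) ^ 2) = (1 / (3 * (8 * π ^ 2))) * (1 + J) := by
    rw [hint, hsplit, hpart1, hpart2, hC]
    field_simp
    ring
  refine ⟨hmain, ?_⟩
  rw [hmain]
  have h1 : (1 / (3 * (8 * π ^ 2)) : ℝ) = 1 / (24 * π ^ 2) := by ring
  rw [h1]
  have hc : (0:ℝ) < 1 / (24 * π ^ 2) := by positivity
  nlinarith
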